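/- Let a, b, c > 0 and h ∈ ℝ with |h| < b. Set L₁ = 2π/√(a² + h²), c₁ = a² + h², L₂ = 4π b c/√(b² − h²), c₂ = h² − b². Then the inequality ∫₀^{L₁}(u₁'(s)² − c₁·u₁(s)²) ds + ∫₀^{L₂}(u₂'(s)² − c₂·u₂(s)²) ds ≥ 0 holds for every pair of C¹ functions u₁, u₂ : ℝ → ℝ with uᵢ Lᵢ-periodic and ∫₀^{L₁} u₁ + ∫₀^{L₂} u₂ = 0, if and only if (a² + h²)^{3/2}/(2π) − (b² − h²)^{3/2}/(4π b c) ≤ 0. -/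

import Mathlib

open MeasureTheory Complex Set AddCircle intervalIntegral

namespace Stmt15

lemma liftIoc_eq_of_periodic {L : ℝ} [hLF : Fact (0 < L)] {f : ℝ → ℂ}
    (hper : Function.Periodic f L) (x : ℝ) :
    AddCircle.liftIoc L 0 f (x : AddCircle L) = f x := by
  have hL : 0 < L := hLF.out
  have h1 : toIocMod hL 0 x ∈ Set.Ioc 0 (0 + L) := toIocMod_mem_Ioc hL 0 x
  have hsub : x - toIocMod hL 0 x = toIocDiv hL 0 x • L := self_sub_toIocMod hL 0 x
  have h2 : ((toIocMod hL 0 x : ℝ) : AddCircle L) = (x : AddCircle L) := by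
    symm
    rw [QuotientAddGroup.eq_iff_sub_mem]
    exact AddSubgroup.mem_zmultiples_iff.mpr ⟨toIocDiv hL 0 x, hsub.symm⟩
  have h3 : f (toIocMod hL 0 x) = f x := by
    have hx : toIocMod hL 0 x = x - toIocDiv hL 0 x • L := by linarith
    rw [hx, hper.sub_zsmul_eq]
  rw [← h2, AddCircle.liftIoc_coe_apply h1, h3]

lemma continuous_liftIoc_of_periodic {L : ℝ} [hLF : Fact (0 < L)] {f : ℝ → ℂ}
    (hf : Continuous f) (hper : Function.Periodic f L) :
    Continuous (AddCircle.liftIoc L 0 f) := by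
  have hL : 0 < L := hLF.out
  have heq : AddCircle.liftIoc L 0 f = AddCircle.liftIco L 0 f := by
    funext z
    induction z using QuotientAddGroup.induction_on with
    | H x =>
      rw [liftIoc_eq_of_periodic hper x]
      -- liftIco at coe x
      have h1 : toIcoMod hL 0 x ∈ Set.Ico 0 (0 + L) := toIcoMod_mem_Ico hL 0 x
      have hsub : x - toIcoMod hL 0 x = toIcoDiv hL 0 x • L := self_sub_toIcoMod hL 0 x
      have h2 : ((toIcoMod hL 0 x : ℝ) : AddCircle L) = (x : AddCircle L) := by
        symm
        rw [QuotientAddGroup.eq_iff_sub_mem]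
        exact AddSubgroup.mem_zmultiples_iff.mpr ⟨toIcoDiv hL 0 x, hsub.symm⟩
      have h3 : f (toIcoMod hL 0 x) = f x := by
        have hx : toIcoMod hL 0 x = x - toIcoDiv hL 0 x • L := by linarith
        rw [hx, hper.sub_zsmul_eq]
      rw [← h2, AddCircle.liftIco_coe_apply h1, h3]
  rw [heq]
  exact AddCircle.liftIco_zero_continuous (by simpa using (hper 0).symm) hf.continuousOn

end Stmt15

namespace Stmt15

lemma parseval_periodic {L : ℝ} [hLF : Fact (0 < L)] {f : ℝ → ℂ}
    (hf : Continuous f) (hper : Function.Periodic f L) :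
    Summable (fun n : ℤ => ‖fourierCoeff (AddCircle.liftIoc L 0 f) n‖ ^ 2) ∧
      ∑' n : ℤ, ‖fourierCoeff (AddCircle.liftIoc L 0 f) n‖ ^ 2
        = (1 / L) * ∫ x in (0:ℝ)..L, ‖f x‖ ^ 2 := by
  have hL : 0 < L := hLF.out
  set F : C(AddCircle L, ℂ) := ⟨AddCircle.liftIoc L 0 f,
    continuous_liftIoc_of_periodic hf hper⟩ with hF
  have hFcoe : ∀ x : ℝ, F (x : AddCircle L) = f x := fun x => liftIoc_eq_of_periodic hper x
  have hco : ∀ n, fourierCoeff (⇑F) n = fourierCoeff (AddCircle.liftIoc L 0 f) n := fun n => rfl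
  constructor
  · have hm := lp.memℓp (fourierBasis.repr (ContinuousMap.toLp (E := ℂ) 2 haarAddCircle ℂ F))
    have hs := (memℓp_gen_iff (p := 2) (by norm_num)).mp hm
    have : ∀ n : ℤ, ‖(fourierBasis.repr (ContinuousMap.toLp (E := ℂ) 2 haarAddCircle ℂ F)) n‖
        ^ ENNReal.toReal 2 = ‖fourierCoeff (AddCircle.liftIoc L 0 f) n‖ ^ 2 := by
      intro n
      rw [fourierBasis_repr, fourierCoeff_toLp, hco]
      norm_num
    exact hs.congr this
  · have P := tsum_sq_fourierCoeff (ContinuousMap.toLp (E := ℂ) 2 haarAddCircle ℂ F)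
    simp_rw [fourierCoeff_toLp] at P
    have PR : ∫ t : AddCircle L, ‖(ContinuousMap.toLp (E := ℂ) 2 haarAddCircle ℂ F) t‖ ^ 2
        ∂haarAddCircle = ∫ t : AddCircle L, ‖F t‖ ^ 2 ∂haarAddCircle := by
      apply MeasureTheory.integral_congr_ae
      filter_upwards [ContinuousMap.coeFn_toLp (p := 2) (μ := haarAddCircle) (𝕜 := ℂ) F] with t ht
      rw [ht]
    rw [PR] at P
    have hvol : ∫ x in (0:ℝ)..(0 + L), ‖F (x : AddCircle L)‖ ^ 2
        = ∫ t : AddCircle L, ‖F t‖ ^ 2 ∂volume :=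
      AddCircle.intervalIntegral_preimage L 0 (fun t => ‖F t‖ ^ 2)
    rw [AddCircle.volume_eq_smul_haarAddCircle, MeasureTheory.integral_smul_measure,
      ENNReal.toReal_ofReal hL.le] at hvol
    have hint : ∫ x in (0:ℝ)..(0 + L), ‖F (x : AddCircle L)‖ ^ 2
        = ∫ x in (0:ℝ)..L, ‖f x‖ ^ 2 := by
      rw [zero_add]
      apply intervalIntegral.integral_congr
      intro x _
      show ‖F (x : AddCircle L)‖ ^ 2 = ‖f x‖ ^ 2
      rw [hFcoe]
    rw [hint] at hvol
    simp only [hco] at P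
    rw [P, hvol, smul_eq_mul]
    field_simp

end Stmt15

namespace Stmt15

lemma wirtinger {L : ℝ} (hL : 0 < L) {u : ℝ → ℝ} (hu : ContDiff ℝ 1 u)
    (hper : Function.Periodic u L) :
    (2 * Real.pi / L) ^ 2 *
      ((∫ s in (0:ℝ)..L, (u s) ^ 2) - (∫ s in (0:ℝ)..L, u s) ^ 2 / L)
      ≤ ∫ s in (0:ℝ)..L, (deriv u s) ^ 2 := by
  haveI : Fact (0 < L) := ⟨hL⟩
  have hπ := Real.pi_pos
  set f : ℝ → ℂ := fun x => (u x : ℂ) with hf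
  set g : ℝ → ℂ := fun x => Complex.ofReal (deriv u x) with hg
  have huc : Continuous u := hu.continuous
  have hu'c : Continuous (deriv u) := hu.continuous_deriv le_rfl
  have hfc : Continuous f := Complex.continuous_ofReal.comp huc
  have hgc : Continuous g := Complex.continuous_ofReal.comp hu'c
  have hperf : Function.Periodic f L := fun x => by simp [hf, hper x]
  have hperu' : Function.Periodic (deriv u) L := by
    intro x
    have h1 : (fun y => u (y + L)) = u := funext fun y => hper y
    calc deriv u (x + L) = deriv (fun y => u (y + L)) x := (deriv_comp_add_const u L x).symm
      _ = deriv u x := by rw [h1]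
  have hperg : Function.Periodic g L := fun x => by simp [hg, hperu' x]
  -- coefficients
  set c : ℤ → ℂ := fun n => fourierCoeff (AddCircle.liftIoc L 0 f) n with hcdef
  set c' : ℤ → ℂ := fun n => fourierCoeff (AddCircle.liftIoc L 0 g) n with hc'def
  obtain ⟨S1, E1⟩ := parseval_periodic hfc hperf
  obtain ⟨S2, E2⟩ := parseval_periodic hgc hperg
  have hnf : ∀ x : ℝ, ‖f x‖ ^ 2 = (u x) ^ 2 := fun x => by
    rw [hf]; simp [Complex.norm_real, _root_.sq_abs]
  have hng : ∀ x : ℝ, ‖g x‖ ^ 2 = (deriv u x) ^ 2 := fun x => by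
    rw [hg]; simp [Complex.norm_real, _root_.sq_abs]
  have E1' : ∑' n : ℤ, ‖c n‖ ^ 2 = (1 / L) * ∫ x in (0:ℝ)..L, (u x) ^ 2 := by
    rw [E1]; congr 1; exact intervalIntegral.integral_congr fun x _ => hnf x
  have E2' : ∑' n : ℤ, ‖c' n‖ ^ 2 = (1 / L) * ∫ x in (0:ℝ)..L, (deriv u x) ^ 2 := by
    rw [E2]; congr 1; exact intervalIntegral.integral_congr fun x _ => hng x
  -- n = 0 coefficient
  have hc0 : ‖c 0‖ ^ 2 = ((∫ s in (0:ℝ)..L, u s) / L) ^ 2 := by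
    have h1 : c 0 = (1 / L : ℝ) • ∫ x in (0:ℝ)..(0 + L),
        fourier (-(0:ℤ)) (x : AddCircle L) • AddCircle.liftIoc L 0 f x := by
      rw [hcdef]
      exact fourierCoeff_eq_intervalIntegral (AddCircle.liftIoc L 0 f) 0 0
    have h2 : ∫ x in (0:ℝ)..(0 + L),
        fourier (-(0:ℤ)) (x : AddCircle L) • AddCircle.liftIoc L 0 f x
        = ∫ x in (0:ℝ)..L, f x := by
      rw [zero_add]
      apply intervalIntegral.integral_congr
      intro x _
      show (fourier (-(0:ℤ))) (x : AddCircle L) • AddCircle.liftIoc L 0 f (x : AddCircle L) = f x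
      rw [liftIoc_eq_of_periodic hperf x]
      simp
    have h3 : (∫ x in (0:ℝ)..L, f x) = ((∫ s in (0:ℝ)..L, u s : ℝ) : ℂ) := by
      rw [hf]
      exact intervalIntegral.integral_ofReal
    rw [h1, h2, h3, norm_smul, mul_pow, Complex.norm_real, Real.norm_eq_abs,
      Real.norm_eq_abs, _root_.sq_abs, _root_.sq_abs]
    ring
  -- derivative coefficient relation
  have hab : (0:ℝ) < 0 + L := lt_add_of_pos_right 0 hL
  have hbridge : ∀ n, c n = fourierCoeffOn hab f n := fun n =>
    fourierCoeff_liftIoc_eq f n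
  have hbridge' : ∀ n, c' n = fourierCoeffOn hab g n := fun n =>
    fourierCoeff_liftIoc_eq g n
  have hD : ∀ x ∈ Set.uIcc (0:ℝ) (0 + L), HasDerivAt f (g x) x := by
    intro x _
    exact ((hu.differentiable one_ne_zero) x).hasDerivAt.ofReal_comp
  have hgint : IntervalIntegrable g volume 0 (0 + L) := hgc.intervalIntegrable _ _
  have hkey : ∀ n : ℤ, n ≠ 0 → ‖c n‖ ^ 2 ≤ (L / (2 * Real.pi)) ^ 2 * ‖c' n‖ ^ 2 := by
    intro n hn
    have hrel := fourierCoeffOn_of_hasDerivAt hab hn hD hgint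
    have hf0 : f (0 + L) - f 0 = 0 := by rw [hperf 0, sub_self]
    rw [hf0, mul_zero, zero_sub, ← hbridge, ← hbridge'] at hrel
    have hnn : (1:ℝ) ≤ |(n:ℝ)| := by
      rw [← Int.cast_abs]
      exact_mod_cast Int.one_le_abs hn
    have hnpos : (0:ℝ) < |(n:ℝ)| := lt_of_lt_of_le one_pos hnn
    have hnorm : ‖c n‖ = L / (2 * Real.pi * |(n:ℝ)|) * ‖c' n‖ := by
      rw [hrel]
      rw [norm_mul, norm_neg, norm_mul]
      have e1 : ‖(1:ℂ) / (-2 * (Real.pi:ℂ) * Complex.I * (n:ℂ))‖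
          = 1 / (2 * Real.pi * |(n:ℝ)|) := by
        rw [norm_div, norm_one]
        rw [show (-2 * (Real.pi:ℂ) * Complex.I * (n:ℂ))
          = ((-2 : ℂ) * (Real.pi:ℂ)) * (Complex.I * (n:ℂ)) by ring]
        rw [norm_mul, norm_mul, norm_mul, Complex.norm_I, one_mul]
        simp [abs_of_pos Real.pi_pos, Complex.norm_real, Complex.norm_intCast]
      rw [e1]
      simp only [Complex.ofReal_zero, Complex.ofReal_add, sub_zero, zero_add,
        Complex.norm_real, Real.norm_eq_abs, abs_of_pos hL]
      ring
    have h1 : (L / (2 * Real.pi * |(n:ℝ)|)) ^ 2 ≤ (L / (2 * Real.pi)) ^ 2 := by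
      apply pow_le_pow_left₀ (by positivity)
      apply div_le_div_of_nonneg_left hL.le (by positivity)
      nlinarith [Real.pi_pos]
    calc ‖c n‖ ^ 2 = (L / (2 * Real.pi * |(n:ℝ)|)) ^ 2 * ‖c' n‖ ^ 2 := by
          rw [hnorm, mul_pow]
      _ ≤ (L / (2 * Real.pi)) ^ 2 * ‖c' n‖ ^ 2 :=
          mul_le_mul_of_nonneg_right h1 (sq_nonneg _)
  -- tsum comparison
  classical
  have hpos1 : ∀ n : ℤ, 0 ≤ (if n = 0 then 0 else ‖c n‖ ^ 2) := by
    intro n; split <;> positivity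
  have hpos2 : ∀ n : ℤ, 0 ≤ (if n = 0 then 0 else ‖c' n‖ ^ 2) := by
    intro n; split <;> positivity
  have hite1 : ∀ n : ℤ, (if n = 0 then 0 else ‖c n‖ ^ 2) ≤ ‖c n‖ ^ 2 := by
    intro n; split <;> [positivity; exact le_rfl]
  have hite2 : ∀ n : ℤ, (if n = 0 then 0 else ‖c' n‖ ^ 2) ≤ ‖c' n‖ ^ 2 := by
    intro n; split <;> [positivity; exact le_rfl]
  have hs1 : Summable (fun n : ℤ => if n = 0 then 0 else ‖c n‖ ^ 2) :=
    Summable.of_nonneg_of_le hpos1 hite1 S1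
  have hs2 : Summable (fun n : ℤ => if n = 0 then 0 else ‖c' n‖ ^ 2) :=
    Summable.of_nonneg_of_le hpos2 hite2 S2
  have hcomp : ∑' n : ℤ, (if n = 0 then 0 else ‖c n‖ ^ 2)
      ≤ (L / (2 * Real.pi)) ^ 2 * ∑' n : ℤ, (if n = 0 then 0 else ‖c' n‖ ^ 2) := by
    rw [← tsum_mul_left]
    refine Summable.tsum_le_tsum (fun n => ?_) hs1 (hs2.mul_left _)
    by_cases hn : n = 0
    · simp [hn]
    · simp only [if_neg hn]
      exact hkey n hn
  have hT1 : ∑' n : ℤ, ‖c n‖ ^ 2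
      = ‖c 0‖ ^ 2 + ∑' n : ℤ, (if n = 0 then 0 else ‖c n‖ ^ 2) :=
    Summable.tsum_eq_add_tsum_ite S1 0
  have hT2' : ∑' n : ℤ, (if n = 0 then 0 else ‖c' n‖ ^ 2) ≤ ∑' n : ℤ, ‖c' n‖ ^ 2 :=
    Summable.tsum_le_tsum hite2 hs2 S2
  have main : (1 / L) * ∫ x in (0:ℝ)..L, (u x) ^ 2
      ≤ ((∫ s in (0:ℝ)..L, u s) / L) ^ 2
        + (L / (2 * Real.pi)) ^ 2 * ((1 / L) * ∫ x in (0:ℝ)..L, (deriv u x) ^ 2) := by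
    rw [← E1', ← E2', ← hc0, hT1]
    nlinarith [hcomp, hT2', sq_nonneg (L / (2 * Real.pi))]
  set A := ∫ s in (0:ℝ)..L, u s with hA
  set I1 := ∫ s in (0:ℝ)..L, (u s) ^ 2 with hI1
  set I2 := ∫ s in (0:ℝ)..L, (deriv u s) ^ 2 with hI2
  have hmul := mul_le_mul_of_nonneg_left main hL.le
  have h2 : L * ((1 / L) * I1) = I1 := by field_simp
  have h3 : L * ((A / L) ^ 2 + (L / (2 * Real.pi)) ^ 2 * ((1 / L) * I2))
      = A ^ 2 / L + (L / (2 * Real.pi)) ^ 2 * I2 := by field_simp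
  rw [h2, h3] at hmul
  have step : I1 - A ^ 2 / L ≤ (L / (2 * Real.pi)) ^ 2 * I2 := by linarith
  have hfrac : (2 * Real.pi / L) ^ 2 * (L / (2 * Real.pi)) ^ 2 = 1 := by
    field_simp
  calc (2 * Real.pi / L) ^ 2 * (I1 - A ^ 2 / L)
      ≤ (2 * Real.pi / L) ^ 2 * ((L / (2 * Real.pi)) ^ 2 * I2) :=
        mul_le_mul_of_nonneg_left step (sq_nonneg _)
    _ = I2 := by rw [← mul_assoc, hfrac, one_mul]

end Stmt15

namespace Stmt15

lemma meansq {L : ℝ} (hL : 0 < L) {u : ℝ → ℝ} (hu : Continuous u) :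
    (∫ s in (0:ℝ)..L, u s) ^ 2 / L ≤ ∫ s in (0:ℝ)..L, (u s) ^ 2 := by
  set A := ∫ s in (0:ℝ)..L, u s with hA
  have h0 : 0 ≤ ∫ s in (0:ℝ)..L, (u s - A / L) ^ 2 :=
    intervalIntegral.integral_nonneg hL.le fun x _ => sq_nonneg _
  have hexp : ∫ s in (0:ℝ)..L, (u s - A / L) ^ 2
      = (∫ s in (0:ℝ)..L, (u s) ^ 2) - 2 * (A / L) * A + (A / L) ^ 2 * L := by
    have h1 : ∀ s : ℝ, (u s - A / L) ^ 2
        = (u s) ^ 2 - 2 * (A / L) * u s + (A / L) ^ 2 := fun s => by ring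
    rw [intervalIntegral.integral_congr (g := fun s =>
      (u s) ^ 2 - 2 * (A / L) * u s + (A / L) ^ 2) (fun s _ => h1 s)]
    rw [intervalIntegral.integral_add (f := fun s => u s ^ 2 - 2 * (A / L) * u s)
      (g := fun _ => (A / L) ^ 2) (((hu.pow 2).sub
      ((continuous_const.mul hu))).intervalIntegrable _ _)
      (continuous_const.intervalIntegrable _ _),
      intervalIntegral.integral_sub (f := fun s => u s ^ 2) (g := fun s => 2 * (A / L) * u s)
      ((hu.pow 2).intervalIntegrable _ _)
      ((continuous_const.mul hu).intervalIntegrable _ _),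
      intervalIntegral.integral_const_mul, intervalIntegral.integral_const]
    rw [← hA]
    simp [smul_eq_mul]
    ring
  rw [hexp] at h0
  have : (A / L) ^ 2 * L = A ^ 2 / L := by field_simp
  rw [this] at h0
  have h2 : 2 * (A / L) * A = 2 * (A ^ 2 / L) := by ring
  rw [h2] at h0
  linarith

end Stmt15




/-- Analytic content of Lemma 4.2 (le:ejemplo): for the union of a spherical
disk of boundary curvature `h` (boundary length `L₁ = 2π/√(a²+h²)`, potential
`c₁ = a²+h²`) and a symmetric hyperbolic annulus (boundary length
`L₂ = 4πbc/√(b²−h²)`, potential `c₂ = h²−b²`), the index form is nonnegative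
on all pairs of periodic `C¹` functions with total mean zero iff
`(a²+h²)^{3/2}/(2π) − (b²−h²)^{3/2}/(4πbc) ≤ 0`. -/
theorem stmt_15 (a b c h : ℝ) (ha : 0 < a) (hb : 0 < b) (hc : 0 < c)
    (hh : |h| < b)
    (L₁ L₂ c₁ c₂ : ℝ)
    (hL₁ : L₁ = 2 * Real.pi / Real.sqrt (a ^ 2 + h ^ 2))
    (hL₂ : L₂ = 4 * Real.pi * b * c / Real.sqrt (b ^ 2 - h ^ 2))
    (hc₁ : c₁ = a ^ 2 + h ^ 2) (hc₂ : c₂ = h ^ 2 - b ^ 2) :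
    (∀ u₁ u₂ : ℝ → ℝ, ContDiff ℝ 1 u₁ → ContDiff ℝ 1 u₂ →
      Function.Periodic u₁ L₁ → Function.Periodic u₂ L₂ →
      (∫ s in (0:ℝ)..L₁, u₁ s) + (∫ s in (0:ℝ)..L₂, u₂ s) = 0 →
      0 ≤ (∫ s in (0:ℝ)..L₁, ((deriv u₁ s) ^ 2 - c₁ * (u₁ s) ^ 2)) +
          (∫ s in (0:ℝ)..L₂, ((deriv u₂ s) ^ 2 - c₂ * (u₂ s) ^ 2))) ↔
    (a ^ 2 + h ^ 2) ^ ((3:ℝ) / 2) / (2 * Real.pi) -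
      (b ^ 2 - h ^ 2) ^ ((3:ℝ) / 2) / (4 * Real.pi * b * c) ≤ 0 := by
  have hπ := Real.pi_pos
  have hh2 : h ^ 2 < b ^ 2 := by
    have h1 := abs_lt.mp hh
    nlinarith [abs_nonneg h, _root_.sq_abs h]
  have hah : 0 < a ^ 2 + h ^ 2 := by positivity
  have hbh : 0 < b ^ 2 - h ^ 2 := by linarith
  have hc1pos : 0 < c₁ := by rw [hc₁]; positivity
  have hc2neg : c₂ < 0 := by rw [hc₂]; linarith
  have hs1pos : 0 < Real.sqrt (a ^ 2 + h ^ 2) := Real.sqrt_pos.mpr hah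
  have hs2pos : 0 < Real.sqrt (b ^ 2 - h ^ 2) := Real.sqrt_pos.mpr hbh
  have hL1pos : 0 < L₁ := by rw [hL₁]; positivity
  have hL2pos : 0 < L₂ := by rw [hL₂]; positivity
  have hsq1 : Real.sqrt (a ^ 2 + h ^ 2) ^ 2 = a ^ 2 + h ^ 2 := Real.sq_sqrt hah.le
  have hsq2 : Real.sqrt (b ^ 2 - h ^ 2) ^ 2 = b ^ 2 - h ^ 2 := Real.sq_sqrt hbh.le
  have hrpow : ∀ x : ℝ, 0 < x → x ^ ((3:ℝ)/2) = x * Real.sqrt x := by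
    intro x hx
    rw [show (3:ℝ)/2 = 1 + 1/2 by norm_num, Real.rpow_add hx, Real.rpow_one,
      Real.sqrt_eq_rpow]
  have key1 : c₁ / L₁ = (a ^ 2 + h ^ 2) ^ ((3:ℝ)/2) / (2 * Real.pi) := by
    rw [hc₁, hL₁, hrpow _ hah]
    rw [div_div_eq_mul_div]
  have key2 : -c₂ / L₂ = (b ^ 2 - h ^ 2) ^ ((3:ℝ)/2) / (4 * Real.pi * b * c) := by
    rw [hc₂, hL₂, hrpow _ hbh]
    rw [show -(h ^ 2 - b ^ 2) = b ^ 2 - h ^ 2 by ring, div_div_eq_mul_div]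
  have keyiff : ((a ^ 2 + h ^ 2) ^ ((3:ℝ)/2) / (2 * Real.pi) -
      (b ^ 2 - h ^ 2) ^ ((3:ℝ)/2) / (4 * Real.pi * b * c) ≤ 0) ↔ c₁ / L₁ + c₂ / L₂ ≤ 0 := by
    rw [← key1, ← key2, show c₁ / L₁ - -c₂ / L₂ = c₁ / L₁ + c₂ / L₂ by ring]
  have hsplit : ∀ (M cc : ℝ) (u : ℝ → ℝ), ContDiff ℝ 1 u →
      (∫ s in (0:ℝ)..M, ((deriv u s) ^ 2 - cc * (u s) ^ 2))
      = (∫ s in (0:ℝ)..M, (deriv u s) ^ 2) - cc * ∫ s in (0:ℝ)..M, (u s) ^ 2 := by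
    intro M cc u hu
    rw [intervalIntegral.integral_sub (f := fun s => deriv u s ^ 2) (g := fun s => cc * u s ^ 2)
      (((hu.continuous_deriv le_rfl).pow 2).intervalIntegrable _ _)
      ((continuous_const.mul (hu.continuous.pow 2)).intervalIntegrable _ _),
      intervalIntegral.integral_const_mul]
  rw [keyiff]
  constructor
  · intro H
    have happ := H (fun _ => 1 / L₁) (fun _ => -(1 / L₂)) contDiff_const contDiff_const
      (fun x => rfl) (fun x => rfl) (by
        rw [intervalIntegral.integral_const, intervalIntegral.integral_const]
        simp only [smul_eq_mul, sub_zero]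
        field_simp
        ring)
    rw [hsplit L₁ c₁ _ contDiff_const, hsplit L₂ c₂ _ contDiff_const] at happ
    simp only [deriv_const', intervalIntegral.integral_const, smul_eq_mul, sub_zero,
      ne_eq, zero_pow, OfNat.ofNat_ne_zero, not_false_eq_true] at happ
    have e1 : L₁ * (1 / L₁) ^ 2 = 1 / L₁ := by field_simp
    have e2 : L₂ * (-(1 / L₂)) ^ 2 = 1 / L₂ := by field_simp
    have hz : (∫ s in (0:ℝ)..L₁, (0:ℝ) ^ 2) = 0 := by simp
    have hz2 : (∫ s in (0:ℝ)..L₂, (0:ℝ) ^ 2) = 0 := by simp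
    -- happ should now be : 0 ≤ 0 - c₁ * (L₁ * (1/L₁)^2) + (0 - c₂ * (L₂ * (1/L₂)^2))
    have : 0 ≤ -(c₁ * (1 / L₁)) + -(c₂ * (1 / L₂)) := by nlinarith [happ, e1, e2]
    have hq1 : c₁ * (1 / L₁) = c₁ / L₁ := by ring
    have hq2 : c₂ * (1 / L₂) = c₂ / L₂ := by ring
    linarith [this]
  · intro hcsum u₁ u₂ hu1 hu2 hp1 hp2 hmean
    rw [hsplit L₁ c₁ u₁ hu1, hsplit L₂ c₂ u₂ hu2]
    have W1 := Stmt15.wirtinger hL1pos hu1 hp1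
    have hc1L : (2 * Real.pi / L₁) ^ 2 = c₁ := by
      have : 2 * Real.pi / L₁ = Real.sqrt (a ^ 2 + h ^ 2) := by
        rw [hL₁]; field_simp
      rw [this, hsq1, hc₁]
    rw [hc1L] at W1
    have M2 := Stmt15.meansq hL2pos hu2.continuous
    have D2 : 0 ≤ ∫ s in (0:ℝ)..L₂, (deriv u₂ s) ^ 2 :=
      intervalIntegral.integral_nonneg hL2pos.le fun x _ => sq_nonneg _
    set A1 := ∫ s in (0:ℝ)..L₁, u₁ s with hA1
    set A2 := ∫ s in (0:ℝ)..L₂, u₂ s with hA2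
    have hAe : A2 ^ 2 = A1 ^ 2 := by
      have : A2 = -A1 := by linarith
      rw [this]; ring
    rw [hAe] at M2
    have t2 : 0 ≤ (-c₂) * ((∫ s in (0:ℝ)..L₂, (u₂ s) ^ 2) - A1 ^ 2 / L₂) :=
      mul_nonneg (by linarith) (by linarith)
    have t3 : 0 ≤ A1 ^ 2 * (-(c₁ / L₁ + c₂ / L₂)) :=
      mul_nonneg (sq_nonneg _) (by linarith)
    ring_nf at W1 t2 t3 ⊢
    linarith [W1, t2, t3, D2]
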